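/- (Faĭbusovich) Let the LQ system be controllable. Then there exists a Lagrangian subspace Λ ⊆ ℝ^{2n} such that zᵀ·ℍ·z > 0 for every z ∈ Λ with z ≠ 0 (the Hamiltonian is positive definite on Λ). -/

import Mathlib

open Matrix

/-- The standard symplectic matrix `Ω = [[0, I],[−I, 0]]` on `ℝ^{2n}`. -/
noncomputable def Omega (n : ℕ) : Matrix (Fin n ⊕ Fin n) (Fin n ⊕ Fin n) ℝ :=
  Matrix.fromBlocks 0 1 (-1) 0

/-- The Hamiltonian matrix `ℍ = [[B Bᵀ, A],[Aᵀ, Q]]` of the LQ problem. -/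
noncomputable def HMat {n k : ℕ} (A Q : Matrix (Fin n) (Fin n) ℝ)
    (B : Matrix (Fin n) (Fin k) ℝ) : Matrix (Fin n ⊕ Fin n) (Fin n ⊕ Fin n) ℝ :=
  Matrix.fromBlocks (B * Bᵀ) A Aᵀ Q

/-- The Kalman matrix `[B, AB, …, A^{n−1}B]`. -/
noncomputable def Kalman {n k : ℕ} (A : Matrix (Fin n) (Fin n) ℝ)
    (B : Matrix (Fin n) (Fin k) ℝ) : Matrix (Fin n) (Fin n × Fin k) ℝ :=
  Matrix.of fun i jl => (A ^ (jl.1 : ℕ) * B) i jl.2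

/-- Controllability of the LQ system: the Kalman matrix has full rank. -/
def Controllable {n k : ℕ} (A : Matrix (Fin n) (Fin n) ℝ)
    (B : Matrix (Fin n) (Fin k) ℝ) : Prop :=
  (Kalman A B).rank = n

/-- `t` is a conjugate time: some nonzero vertical vector `(p,0)` is mapped by the
Hamiltonian flow `exp(t Ω ℍ)` back into the vertical subspace `𝒱 = {(p,0)}`. -/
def IsConjugateTime {n k : ℕ} (A Q : Matrix (Fin n) (Fin n) ℝ)
    (B : Matrix (Fin n) (Fin k) ℝ) (t : ℝ) : Prop :=
  ∃ p : Fin n → ℝ, p ≠ 0 ∧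
    ∀ i : Fin n,
      (NormedSpace.exp (t • (Omega n * HMat A Q B))).mulVec (Sum.elim p 0) (Sum.inr i) = 0

namespace FaibAux

variable {n k : ℕ}

/-- The quadratic form of a (not necessarily symmetric) square matrix. -/
def qf {n : ℕ} (M : Matrix (Fin n) (Fin n) ℝ) (x : Fin n → ℝ) : ℝ := x ⬝ᵥ M *ᵥ x

lemma qf_sum (M : Matrix (Fin n) (Fin n) ℝ) (x : Fin n → ℝ) :
    qf M x = ∑ i, ∑ j, x i * (M i j * x j) := by
  simp [qf, dotProduct, mulVec, Finset.mul_sum]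

lemma qf_add (M N : Matrix (Fin n) (Fin n) ℝ) (x : Fin n → ℝ) :
    qf (M + N) x = qf M x + qf N x := by
  simp [qf_sum, Finset.sum_add_distrib, add_mul, mul_add]

lemma qf_smul (c : ℝ) (M : Matrix (Fin n) (Fin n) ℝ) (x : Fin n → ℝ) :
    qf (c • M) x = c * qf M x := by
  simp [qf_sum, Finset.mul_sum]
  congr 1; ext i; congr 1; ext j; ring

lemma qf_transpose (M : Matrix (Fin n) (Fin n) ℝ) (x : Fin n → ℝ) :
    qf Mᵀ x = qf M x := by
  rw [qf_sum, qf_sum, Finset.sum_comm]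
  congr 1; ext i; congr 1; ext j; rw [transpose_apply]; ring

lemma qf_smul_vec (M : Matrix (Fin n) (Fin n) ℝ) (c : ℝ) (x : Fin n → ℝ) :
    qf M (c • x) = c ^ 2 * qf M x := by
  simp [qf_sum, Finset.mul_sum]
  congr 1; ext i; congr 1; ext j; ring

lemma qf_continuous (M : Matrix (Fin n) (Fin n) ℝ) : Continuous fun x => qf M x := by
  have : (fun x => qf M x) = fun x : Fin n → ℝ => ∑ i, ∑ j, x i * (M i j * x j) := by
    funext x; exact qf_sum M x
  rw [this]
  exact continuous_finset_sum _ fun i _ => continuous_finset_sum _ fun j _ =>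
    (continuous_apply i).mul (continuous_const.mul (continuous_apply j))

lemma qf_one_pos {x : Fin n → ℝ} (hx : x ≠ 0) : 0 < qf 1 x := by
  have : qf 1 x = x ⬝ᵥ x := by simp [qf]
  rw [this]
  rcases (dotProduct_self_eq_zero (v := x)).not.mpr hx with h
  have hnn : 0 ≤ x ⬝ᵥ x := by
    apply Finset.sum_nonneg; intro i _; exact mul_self_nonneg _
  cases hnn.lt_or_eq with
  | inl h' => exact h'
  | inr h' => exact absurd h'.symm h

lemma qf_BBt_nonneg (B : Matrix (Fin n) (Fin k) ℝ) (x : Fin n → ℝ) :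
    0 ≤ qf (B * Bᵀ) x := by
  have : qf (B * Bᵀ) x = (Bᵀ *ᵥ x) ⬝ᵥ (Bᵀ *ᵥ x) := by
    rw [qf, ← mulVec_mulVec, dotProduct_mulVec, ← mulVec_transpose]
  rw [this]
  apply Finset.sum_nonneg; intro i _; exact mul_self_nonneg _

lemma qf_antisym_zero {N : Matrix (Fin n) (Fin n) ℝ} (hN : Nᵀ = -N) (x : Fin n → ℝ) :
    qf N x = 0 := by
  have h1 : qf N x = qf Nᵀ x := (qf_transpose N x).symm
  have h2 : qf Nᵀ x = - qf N x := by
    rw [hN]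
    have : (-N : Matrix (Fin n) (Fin n) ℝ) = (-1 : ℝ) • N := by simp
    rw [this, qf_smul]; ring
  linarith [h1, h2]

/-- The sphere minimum of a continuous function, with positivity transfer. -/
lemma exists_sphere_min (hn : 1 ≤ n) (f : (Fin n → ℝ) → ℝ) (hf : Continuous f) :
    ∃ x₀ ∈ Metric.sphere (0 : Fin n → ℝ) 1,
      ∀ y ∈ Metric.sphere (0 : Fin n → ℝ) 1, f x₀ ≤ f y := by
  have : Nonempty (Fin n) := ⟨⟨0, hn⟩⟩
  have hne : (Metric.sphere (0 : Fin n → ℝ) 1).Nonempty := by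
    refine ⟨fun _ => 1, ?_⟩
    simp [Metric.mem_sphere, dist_zero_right]
  obtain ⟨x₀, hmem, hmin⟩ := (isCompact_sphere (0 : Fin n → ℝ) 1).exists_isMinOn hne hf.continuousOn
  exact ⟨x₀, hmem, fun y hy => hmin hy⟩

lemma qf_pos_of_sphere {M : Matrix (Fin n) (Fin n) ℝ}
    (h : ∀ y ∈ Metric.sphere (0 : Fin n → ℝ) 1, 0 < qf M y) :
    ∀ x, x ≠ 0 → 0 < qf M x := by
  intro x hx
  have hxn : ‖x‖ ≠ 0 := norm_ne_zero_iff.mpr hx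
  have hmem : (‖x‖⁻¹ • x) ∈ Metric.sphere (0 : Fin n → ℝ) 1 := by
    simp [Metric.mem_sphere, dist_zero_right, norm_smul, abs_of_nonneg,
      inv_mul_cancel₀ hxn]
  have := h _ hmem
  rw [qf_smul_vec] at this
  have hx2 : 0 < (‖x‖⁻¹) ^ 2 := by positivity
  nlinarith [this, hx2]

/-- The set of matrices with positive-definite quadratic form. -/
def sPD (n : ℕ) : Set (Matrix (Fin n) (Fin n) ℝ) :=
  {M | ∀ x, x ≠ 0 → 0 < qf M x}

lemma one_mem_sPD : (1 : Matrix (Fin n) (Fin n) ℝ) ∈ sPD n :=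
  fun _ hx => qf_one_pos hx

lemma smul_mem_sPD {M : Matrix (Fin n) (Fin n) ℝ} (hM : M ∈ sPD n) {c : ℝ} (hc : 0 < c) :
    c • M ∈ sPD n := by
  intro x hx
  rw [qf_smul]
  exact mul_pos hc (hM x hx)

lemma convex_sPD : Convex ℝ (sPD n) := by
  intro X hX Y hY a b ha hb hab
  intro x hx
  rw [qf_add, qf_smul, qf_smul]
  rcases eq_or_lt_of_le ha with h | h
  · have : b = 1 := by linarith
    simp [← h, this]
    exact hY x hx
  · have h2 : 0 ≤ b * qf Y x := mul_nonneg hb (hY x hx).le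
    nlinarith [hX x hx]


/-- Bound on the quadratic form on the sphere by entries. -/
lemma abs_qf_le {N : Matrix (Fin n) (Fin n) ℝ} {δ : ℝ} (hδ0 : 0 ≤ δ)
    (hδ : ∀ i j, |N i j| ≤ δ)
    {y : Fin n → ℝ} (hy : ‖y‖ ≤ 1) : |qf N y| ≤ δ * (n * n) := by
  have hyi : ∀ i, |y i| ≤ 1 := fun i => (norm_le_pi_norm y i).trans hy
  rw [qf_sum]
  calc |∑ i, ∑ j, y i * (N i j * y j)|
      ≤ ∑ i, |∑ j, y i * (N i j * y j)| := Finset.abs_sum_le_sum_abs _ _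
    _ ≤ ∑ i : Fin n, ∑ j : Fin n, |y i * (N i j * y j)| := by
        apply Finset.sum_le_sum; intro i _; exact Finset.abs_sum_le_sum_abs _ _
    _ ≤ ∑ i : Fin n, ∑ j : Fin n, δ := by
        apply Finset.sum_le_sum; intro i _
        apply Finset.sum_le_sum; intro j _
        rw [abs_mul, abs_mul]
        calc |y i| * (|N i j| * |y j|)
            ≤ 1 * (δ * 1) := by
              apply mul_le_mul (hyi i) _ (by positivity) zero_le_one
              exact mul_le_mul (hδ i j) (hyi j) (abs_nonneg _) hδ0
          _ = δ := by ring
    _ = δ * (n * n) := by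
        simp [Finset.sum_const, Finset.card_univ]
        ring

lemma isOpen_sPD : IsOpen (sPD n) := by
  rw [isOpen_iff_forall_mem_open]
  intro X hX
  rcases Nat.eq_zero_or_pos n with h0 | hn
  · refine ⟨Set.univ, ?_, isOpen_univ, trivial⟩
    intro Y _
    intro x hx
    exfalso
    apply hx
    funext i
    exact absurd i.2 (by omega)
  obtain ⟨x₀, hx₀mem, hx₀min⟩ := exists_sphere_min hn (qf X) (qf_continuous X)
  set c := qf X x₀ with hc
  have hx₀ne : x₀ ≠ 0 := by
    intro h
    rw [Metric.mem_sphere, dist_zero_right, h, norm_zero] at hx₀mem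
    norm_num at hx₀mem
  have hcpos : 0 < c := hX x₀ hx₀ne
  set δ : ℝ := c / (n * n + 1) with hδdef
  have hδpos : 0 < δ := by positivity
  refine ⟨{Y | ∀ i j, |Y i j - X i j| < δ}, ?_, ?_, ?_⟩
  · -- contained in sPD
    intro Y hY
    apply qf_pos_of_sphere
    intro y hy
    have hy1 : ‖y‖ = 1 := by
      rw [Metric.mem_sphere, dist_zero_right] at hy; exact hy
    have hXy : c ≤ qf X y := hx₀min y hy
    have hsplit : qf Y y = qf X y + qf (Y - X) y := by
      rw [← qf_add]; congr 1; abel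
    have hbound : |qf (Y - X) y| ≤ δ * (n * n) := by
      apply abs_qf_le hδpos.le
      · intro i j
        have := hY i j
        simpa [Matrix.sub_apply] using this.le
      · exact hy1.le
    have hlt : δ * (n * n) < c := by
      rw [hδdef]
      rw [div_mul_eq_mul_div, div_lt_iff₀ (by positivity)]
      nlinarith
    have := abs_le.mp hbound
    linarith [this.1]
  · -- open
    have heq : {Y : Matrix (Fin n) (Fin n) ℝ | ∀ i j, |Y i j - X i j| < δ}
        = ⋂ i, ⋂ j, {Y : Matrix (Fin n) (Fin n) ℝ | |Y i j - X i j| < δ} := by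
      ext Y; simp
    rw [heq]
    apply isOpen_iInter_of_finite; intro i
    apply isOpen_iInter_of_finite; intro j
    have hcont : Continuous fun Y : Matrix (Fin n) (Fin n) ℝ => |Y i j - X i j| :=
      ((continuous_id.matrix_elem i j).sub continuous_const).abs
    exact isOpen_lt hcont continuous_const
  · intro i j
    simpa using hδpos

/-- The affine set of matrices `B Bᵀ + (A S + S Aᵀ)`. -/
def tSet (A : Matrix (Fin n) (Fin n) ℝ) (B : Matrix (Fin n) (Fin k) ℝ) :
    Set (Matrix (Fin n) (Fin n) ℝ) :=
  {M | ∃ S : Matrix (Fin n) (Fin n) ℝ, M = B * Bᵀ + (A * S + S * Aᵀ)}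

lemma convex_tSet (A : Matrix (Fin n) (Fin n) ℝ) (B : Matrix (Fin n) (Fin k) ℝ) :
    Convex ℝ (tSet A B) := by
  rintro X ⟨S₁, rfl⟩ Y ⟨S₂, rfl⟩ a b ha hb hab
  refine ⟨a • S₁ + b • S₂, ?_⟩
  have hb' : b = 1 - a := by linarith
  subst hb'
  simp only [Matrix.mul_add, Matrix.add_mul, Matrix.mul_smul, Matrix.smul_mul, smul_add]
  module

/-- The entrywise pairing of a functional in terms of its matrix of coefficients. -/
lemma rep_of_clm (f : Matrix (Fin n) (Fin n) ℝ →L[ℝ] ℝ) (X : Matrix (Fin n) (Fin n) ℝ) :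
    f X = ∑ i, ∑ j, X i j * f (Matrix.single i j 1) := by
  conv_lhs => rw [matrix_eq_sum_single X]
  rw [map_sum]
  congr 1; funext i
  rw [map_sum]
  congr 1; funext j
  have : Matrix.single i j (X i j) = (X i j) • Matrix.single i j (1:ℝ) := by
    rw [smul_single, smul_eq_mul, mul_one]
  rw [this, f.map_smul, smul_eq_mul]

lemma transpose_std (i j : Fin n) (c : ℝ) :
    (Matrix.single i j c)ᵀ = Matrix.single j i c := by
  ext a b
  simp only [transpose_apply, Matrix.single, of_apply]
  by_cases h1 : i = b <;> by_cases h2 : j = a <;> simp [h1, h2]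

/-- A symmetric matrix with nonnegative quadratic form kills vectors on which the
quadratic form vanishes. -/
lemma mulVec_eq_zero_of_qf_zero {Z : Matrix (Fin n) (Fin n) ℝ} (hsym : Zᵀ = Z)
    (hpsd : ∀ x, 0 ≤ qf Z x) {v : Fin n → ℝ} (hv : qf Z v = 0) : Z *ᵥ v = 0 := by
  set w := Z *ᵥ v with hw
  have h1 : v ⬝ᵥ Z *ᵥ w = w ⬝ᵥ w := by
    rw [dotProduct_mulVec, ← mulVec_transpose, hsym]
  have h2 : w ⬝ᵥ Z *ᵥ v = w ⬝ᵥ w := rfl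
  have key : ∀ t : ℝ, 0 ≤ 2 * t * (w ⬝ᵥ w) + t ^ 2 * qf Z w := by
    intro t
    have h := hpsd (v + t • w)
    have hexp : qf Z (v + t • w)
        = qf Z v + 2 * t * (w ⬝ᵥ w) + t ^ 2 * qf Z w := by
      simp only [qf, mulVec_add, mulVec_smul, dotProduct_add, add_dotProduct,
        dotProduct_smul, smul_dotProduct, smul_eq_mul]
      rw [h1, h2]
      ring
    rw [hexp, hv] at h
    linarith
  have hq : 0 ≤ qf Z w := hpsd w
  set q := qf Z w with hqdef
  set c := w ⬝ᵥ w with hcdef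
  have hc0 : c = 0 := by
    have hk := key (-(c) / (q + 1))
    have hqpos : 0 < q + 1 := by linarith
    have ht : 2 * (-(c) / (q + 1)) * c + (-(c) / (q + 1)) ^ 2 * q
        = -(c ^ 2 * (q + 2)) / ((q + 1) ^ 2) := by
      field_simp
      ring
    rw [ht] at hk
    rcases div_nonneg_iff.mp hk with ⟨ha, _⟩ | ⟨_, hb⟩
    · have hc2 : c ^ 2 * (q + 2) ≤ 0 := by linarith
      have : c ^ 2 ≤ 0 := by nlinarith [sq_nonneg c]
      have : c ^ 2 = 0 := le_antisymm this (sq_nonneg c)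
      exact pow_eq_zero_iff (by norm_num) |>.mp this
    · exfalso
      have : (0:ℝ) < (q + 1) ^ 2 := by positivity
      linarith
  have : w ⬝ᵥ w = 0 := hc0
  exact dotProduct_self_eq_zero.mp this


section Key

variable (hn : 1 ≤ n) (A : Matrix (Fin n) (Fin n) ℝ) (B : Matrix (Fin n) (Fin k) ℝ)

/-- Key separation lemma: controllability yields `S` with `B Bᵀ + A S + S Aᵀ`
positive definite as a quadratic form. -/
lemma exists_S_pd (hctrl : Controllable A B) :
    ∃ S : Matrix (Fin n) (Fin n) ℝ, B * Bᵀ + (A * S + S * Aᵀ) ∈ sPD n := by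
  by_contra hcon
  push_neg at hcon
  have hdisj : Disjoint (sPD n) (tSet A B) := by
    rw [Set.disjoint_left]
    rintro M hM ⟨S, rfl⟩
    exact hcon S hM
  obtain ⟨f, u, hfs, hft⟩ :=
    geometric_hahn_banach_open convex_sPD isOpen_sPD (convex_tSet A B) hdisj
  -- basic facts
  have hI : (1 : Matrix (Fin n) (Fin n) ℝ) ∈ sPD n := one_mem_sPD
  -- f is nonpositive on sPD
  have f_nonpos : ∀ X ∈ sPD n, f X ≤ 0 := by
    intro X hXs
    by_contra h
    push_neg at h
    set lam : ℝ := (max u 0 + 1) / f X with hlam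
    have hlampos : 0 < lam := by positivity
    have := hfs (lam • X) (smul_mem_sPD hXs hlampos)
    rw [f.map_smul, smul_eq_mul] at this
    have : max u 0 + 1 < u := by
      rw [hlam] at this
      field_simp at this
      linarith [this]
    have := le_max_left u 0
    linarith
  -- f kills the Lyapunov directions
  have hfL : ∀ S : Matrix (Fin n) (Fin n) ℝ, f (A * S + S * Aᵀ) = 0 := by
    intro S
    by_contra h
    set lam : ℝ := (u - f (B * Bᵀ) - 1) / f (A * S + S * Aᵀ) with hlam
    have hmem : B * Bᵀ + (A * (lam • S) + (lam • S) * Aᵀ) ∈ tSet A B := ⟨lam • S, rfl⟩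
    have := hft _ hmem
    rw [map_add, map_add] at this
    have he : A * (lam • S) = lam • (A * S) := by rw [Matrix.mul_smul]
    have he2 : (lam • S) * Aᵀ = lam • (S * Aᵀ) := by rw [Matrix.smul_mul]
    rw [he, he2, f.map_smul, f.map_smul, smul_eq_mul, smul_eq_mul] at this
    have hval : lam * f (A * S) + lam * f (S * Aᵀ) = lam * f (A * S + S * Aᵀ) := by
      rw [map_add]; ring
    rw [hval] at this
    have hne : f (A * S) + f (S * Aᵀ) ≠ 0 := by rw [← map_add]; exact h
    have hlamval : lam * f (A * S + S * Aᵀ) = u - f (B * Bᵀ) - 1 := by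
      rw [hlam, map_add, div_mul_eq_mul_div, mul_div_assoc, div_self hne, mul_one]
    linarith [this, hlamval]
  -- u ≤ f (B Bᵀ)
  have huBB : u ≤ f (B * Bᵀ) := by
    have hmem : B * Bᵀ + (A * (0:Matrix (Fin n) (Fin n) ℝ) + 0 * Aᵀ) ∈ tSet A B := ⟨0, rfl⟩
    have := hft _ hmem
    simpa using this
  have hf1 : f 1 ≤ 0 := f_nonpos _ hI
  -- u is nonnegative
  have hu0 : 0 ≤ u := by
    by_contra h
    push_neg at h
    set eps : ℝ := -u / (2 * (|f 1| + 1)) with heps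
    have hepspos : 0 < eps := by
      rw [heps]
      apply div_pos (by linarith) (by positivity)
    have := hfs (eps • 1) (smul_mem_sPD hI hepspos)
    rw [f.map_smul, smul_eq_mul] at this
    have habs : eps * |f 1| ≤ -u / 2 := by
      rw [heps]
      rw [div_mul_eq_mul_div, div_le_div_iff₀ (by positivity) (by norm_num)]
      nlinarith [abs_nonneg (f 1)]
    have : eps * f 1 ≥ -(eps * |f 1|) := by
      nlinarith [neg_abs_le (f 1), hepspos]
    linarith
  -- f is nonpositive on psd quadratic forms
  have hfpsd : ∀ X : Matrix (Fin n) (Fin n) ℝ, (∀ y, 0 ≤ qf X y) → f X ≤ 0 := by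
    intro X hXpsd
    by_contra h
    push_neg at h
    set eps : ℝ := f X / (2 * (|f 1| + 1)) with heps
    have hepspos : 0 < eps := by rw [heps]; positivity
    have hmem : X + eps • 1 ∈ sPD n := by
      intro x hx
      rw [qf_add, qf_smul]
      have := hXpsd x
      have := qf_one_pos hx
      nlinarith
    have := f_nonpos _ hmem
    rw [map_add, f.map_smul, smul_eq_mul] at this
    have habs : eps * |f 1| ≤ f X / 2 := by
      rw [heps, div_mul_eq_mul_div, div_le_div_iff₀ (by positivity) (by norm_num)]
      nlinarith [abs_nonneg (f 1)]
    nlinarith [neg_abs_le (f 1), hepspos, abs_nonneg (f 1)]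
  have hfBB : f (B * Bᵀ) = 0 := by
    have h1 : f (B * Bᵀ) ≤ 0 := hfpsd _ (qf_BBt_nonneg B)
    linarith
  have hu : u = 0 := le_antisymm (by linarith) hu0
  have hf1neg : f 1 < 0 := by
    have := hfs 1 hI
    rw [hu] at this
    exact this
  -- f kills antisymmetric matrices
  have hfanti : ∀ N : Matrix (Fin n) (Fin n) ℝ, Nᵀ = -N → f N = 0 := by
    intro N hN
    by_contra h
    set lam : ℝ := (-f 1 + 1) / f N with hlam
    have hmem : (1 : Matrix (Fin n) (Fin n) ℝ) + lam • N ∈ sPD n := by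
      intro x hx
      rw [qf_add, qf_smul, qf_antisym_zero hN]
      simpa using qf_one_pos hx
    have := hfs _ hmem
    rw [map_add, f.map_smul, smul_eq_mul, hu] at this
    have : lam * f N = -f 1 + 1 := by rw [hlam]; field_simp
    linarith [hfs _ hmem, this]
  -- the representing matrix
  set Z : Matrix (Fin n) (Fin n) ℝ :=
    Matrix.of (fun i j => -(f (Matrix.single i j 1))) with hZ
  have hZapp : ∀ i j, Z i j = -(f (Matrix.single i j 1)) := fun i j => rfl
  have hrep : ∀ X : Matrix (Fin n) (Fin n) ℝ, f X = -(∑ i, ∑ j, X i j * Z i j) := by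
    intro X
    rw [rep_of_clm]
    rw [← Finset.sum_neg_distrib]
    congr 1; funext i
    rw [← Finset.sum_neg_distrib]
    congr 1; funext j
    rw [hZapp]; ring
  -- Z is symmetric
  have hZsym : Zᵀ = Z := by
    ext i j
    rw [transpose_apply, hZapp, hZapp]
    have hanti : (Matrix.single j i (1:ℝ) - Matrix.single i j 1)ᵀ
        = -(Matrix.single j i (1:ℝ) - Matrix.single i j 1) := by
      rw [transpose_sub, transpose_std, transpose_std]
      rw [neg_sub]
    have h0 := hfanti _ hanti
    rw [map_sub] at h0
    have : f (Matrix.single j i (1:ℝ)) = f (Matrix.single i j 1) := by linarith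
    rw [this]
  -- quadratic form of Z via f on rank-one psd matrices
  have hvMV : ∀ x y : Fin n → ℝ, qf (vecMulVec x x) y = (x ⬝ᵥ y) ^ 2 := by
    intro x y
    rw [qf_sum, pow_two, dotProduct, Finset.sum_mul_sum]
    congr 1; funext i; congr 1; funext j
    rw [vecMulVec_apply]; ring
  have hqfZ : ∀ x : Fin n → ℝ, qf Z x = -(f (vecMulVec x x)) := by
    intro x
    rw [hrep, neg_neg, qf_sum]
    congr 1; funext i; congr 1; funext j
    rw [vecMulVec_apply]; ring
  have hZpsd : ∀ x, 0 ≤ qf Z x := by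
    intro x
    rw [hqfZ]
    have := hfpsd (vecMulVec x x) (fun y => by rw [hvMV]; positivity)
    linarith
  -- the Lyapunov equation for Z
  have hLyap : Aᵀ * Z + Z * A = 0 := by
    ext p q
    have h0 := hfL (Matrix.single p q 1)
    rw [hrep] at h0
    have hAE : ∀ i j : Fin n, (A * Matrix.single p q (1:ℝ)) i j
        = if j = q then A i p else 0 := by
      intro i j
      rcases eq_or_ne j q with rfl | hj
      · simp
      · simp [hj]
    have hEA : ∀ i j : Fin n, (Matrix.single p q (1:ℝ) * Aᵀ) i j
        = if i = p then A j q else 0 := by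
      intro i j
      rcases eq_or_ne i p with rfl | hi
      · simp
      · simp [hi]
    have hsum : ∑ i, ∑ j, (A * Matrix.single p q (1:ℝ) + Matrix.single p q (1:ℝ) * Aᵀ) i j * Z i j
        = (Aᵀ * Z) p q + (Z * A) p q := by
      calc ∑ i, ∑ j, (A * Matrix.single p q (1:ℝ) + Matrix.single p q (1:ℝ) * Aᵀ) i j * Z i j
          = ∑ i, ∑ j, ((if j = q then A i p else 0) * Z i j
              + (if i = p then A j q else 0) * Z i j) := by
            apply Finset.sum_congr rfl; intro i _
            apply Finset.sum_congr rfl; intro j _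
            rw [Matrix.add_apply, hAE, hEA, add_mul]
        _ = (∑ i, ∑ j, (if j = q then A i p else 0) * Z i j)
              + ∑ i, ∑ j, (if i = p then A j q else 0) * Z i j := by
            rw [← Finset.sum_add_distrib]
            apply Finset.sum_congr rfl; intro i _
            rw [← Finset.sum_add_distrib]
        _ = (∑ i, A i p * Z i q) + ∑ j, A j q * Z p j := by
            congr 1
            · apply Finset.sum_congr rfl; intro i _
              simp [ite_mul]
            · rw [Finset.sum_comm]
              apply Finset.sum_congr rfl; intro j _
              simp [ite_mul]
        _ = (Aᵀ * Z) p q + (Z * A) p q := by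
            congr 1 <;> simp [mul_apply, transpose_apply, mul_comm]
    have hfin : (Aᵀ * Z) p q + (Z * A) p q = 0 := by
      rw [← hsum]; linarith
    simpa using hfin
  -- Z kills the columns of B
  have hsumBB : (∑ l, qf Z (fun i => B i l)) = 0 := by
    have h0 : f (B * Bᵀ) = -(∑ i, ∑ j, (B * Bᵀ) i j * Z i j) := hrep _
    rw [hfBB] at h0
    have hY : ∑ i, ∑ j, (B * Bᵀ) i j * Z i j = ∑ l, qf Z (fun i => B i l) := by
      calc ∑ i, ∑ j, (B * Bᵀ) i j * Z i j
          = ∑ i, ∑ j, ∑ l, B i l * B j l * Z i j := by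
            apply Finset.sum_congr rfl; intro i _
            apply Finset.sum_congr rfl; intro j _
            rw [mul_apply, Finset.sum_mul]
            apply Finset.sum_congr rfl; intro l _
            rw [transpose_apply]
        _ = ∑ i, ∑ l, ∑ j, B i l * B j l * Z i j := by
            apply Finset.sum_congr rfl; intro i _
            exact Finset.sum_comm
        _ = ∑ l, ∑ i, ∑ j, B i l * B j l * Z i j := Finset.sum_comm
        _ = ∑ l, qf Z (fun i => B i l) := by
            apply Finset.sum_congr rfl; intro l _
            rw [qf_sum]
            apply Finset.sum_congr rfl; intro i _
            apply Finset.sum_congr rfl; intro j _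
            ring
    linarith
  have hZcols : ∀ l, Z *ᵥ (fun i => B i l) = 0 := by
    intro l
    apply mulVec_eq_zero_of_qf_zero hZsym hZpsd
    have hnn : ∀ l ∈ Finset.univ (α := Fin k), 0 ≤ qf Z (fun i => B i l) :=
      fun l _ => hZpsd _
    exact (Finset.sum_eq_zero_iff_of_nonneg hnn).mp hsumBB l (Finset.mem_univ l)
  have hZB : Z * B = 0 := by
    ext i l
    have h0 := congrFun (hZcols l) i
    simpa [mulVec, dotProduct, mul_apply] using h0
  -- propagate along powers of A
  have hZA : Z * A = -(Aᵀ * Z) := by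
    have := hLyap
    have h' : Z * A = -(Aᵀ * Z) + ((Aᵀ * Z) + Z * A) := by abel
    rw [hLyap, add_zero] at h'
    exact h'
  have hZpow : ∀ j : ℕ, Z * (A ^ j * B) = 0 := by
    intro j
    induction j with
    | zero => simpa using hZB
    | succ j ih =>
        rw [pow_succ']
        calc Z * (A * A ^ j * B) = (Z * A) * (A ^ j * B) := by
              rw [Matrix.mul_assoc, Matrix.mul_assoc]
          _ = -((Aᵀ) * (Z * (A ^ j * B))) := by
              rw [hZA, Matrix.neg_mul, Matrix.mul_assoc]
          _ = 0 := by rw [ih, Matrix.mul_zero, neg_zero]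
  have hZK : Z * Kalman A B = 0 := by
    ext i jl
    have h0 := congrFun (congrFun (hZpow jl.1) i) jl.2
    simp only [mul_apply] at h0 ⊢
    simpa [Kalman, mul_apply] using h0
  -- controllability forces Z = 0
  have hrange : LinearMap.range (Kalman A B).mulVecLin = ⊤ := by
    apply Submodule.eq_top_of_finrank_eq
    rw [Module.finrank_pi, Fintype.card_fin]
    exact hctrl
  have hZzero : Z = 0 := by
    have hsurj := LinearMap.range_eq_top.mp hrange
    ext i j
    obtain ⟨cvec, hcvec⟩ := hsurj (Pi.single j 1)
    have hv : Z *ᵥ (Pi.single j (1:ℝ)) = 0 := by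
      rw [← hcvec, Matrix.mulVecLin_apply, mulVec_mulVec, hZK, Matrix.zero_mulVec]
    have h0 := congrFun hv i
    rw [mulVec_single] at h0
    simpa using h0
  -- final contradiction
  have hfinal : f 1 = 0 := by
    rw [hrep]
    have : ∀ i j : Fin n, Z i j = 0 := by
      intro i j; rw [hZzero]; rfl
    simp [this]
  linarith

/-- Symmetrized version of the key lemma. -/
lemma exists_S_pd_symm (hctrl : Controllable A B) :
    ∃ S : Matrix (Fin n) (Fin n) ℝ, Sᵀ = S ∧ B * Bᵀ + (A * S + S * Aᵀ) ∈ sPD n := by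
  obtain ⟨S, hS⟩ := exists_S_pd A B hctrl
  refine ⟨(1/2 : ℝ) • (S + Sᵀ), ?_, ?_⟩
  · rw [transpose_smul, transpose_add, transpose_transpose, add_comm]
  · intro x hx
    have h := hS x hx
    have e1 : A * ((1/2 : ℝ) • (S + Sᵀ)) = (1/2 : ℝ) • (A * S) + (1/2 : ℝ) • (A * Sᵀ) := by
      rw [Matrix.mul_smul, Matrix.mul_add, smul_add]
    have e2 : ((1/2 : ℝ) • (S + Sᵀ)) * Aᵀ = (1/2 : ℝ) • (S * Aᵀ) + (1/2 : ℝ) • (Sᵀ * Aᵀ) := by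
      rw [Matrix.smul_mul, Matrix.add_mul, smul_add]
    have h3 : qf (A * Sᵀ) x = qf (S * Aᵀ) x := by
      rw [← qf_transpose (S * Aᵀ) x, transpose_mul, transpose_transpose]
    have h4 : qf (Sᵀ * Aᵀ) x = qf (A * S) x := by
      rw [← qf_transpose (A * S) x, transpose_mul]
    have key : qf (B * Bᵀ + (A * ((1/2 : ℝ) • (S + Sᵀ)) + ((1/2 : ℝ) • (S + Sᵀ)) * Aᵀ)) x
        = qf (B * Bᵀ + (A * S + S * Aᵀ)) x := by
      rw [e1, e2]
      simp only [qf_add, qf_smul]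
      rw [h3, h4]
      ring
    rw [key]
    exact h

/-- The final matrix, with the `S Q S` term absorbed by scaling. -/
lemma exists_S_final (hn : 1 ≤ n) (Q : Matrix (Fin n) (Fin n) ℝ) (hctrl : Controllable A B) :
    ∃ S : Matrix (Fin n) (Fin n) ℝ, Sᵀ = S ∧
      B * Bᵀ + (A * S + S * Aᵀ) + S * Q * S ∈ sPD n := by
  obtain ⟨S, hSsym, hSpd⟩ := exists_S_pd_symm A B hctrl
  obtain ⟨x₀, hx₀, hminM⟩ := exists_sphere_min hn (qf (B * Bᵀ + (A * S + S * Aᵀ)))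
    (qf_continuous _)
  have hx₀ne : x₀ ≠ 0 := by
    intro h
    rw [Metric.mem_sphere, dist_zero_right, h, norm_zero] at hx₀
    norm_num at hx₀
  set c := qf (B * Bᵀ + (A * S + S * Aᵀ)) x₀ with hcdef
  have hc : 0 < c := hSpd x₀ hx₀ne
  obtain ⟨y₀, hy₀, hminR⟩ := exists_sphere_min hn (qf (S * Q * S)) (qf_continuous _)
  set m₁ := qf (S * Q * S) y₀ with hm₁def
  set eps := min (1/2 : ℝ) (c / (2 * (|m₁| + 1))) with hepsdef
  have heps0 : 0 < eps := lt_min (by norm_num) (by positivity)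
  have heps1 : eps ≤ 1 := (min_le_left _ _).trans (by norm_num)
  have hepsm : eps * (|m₁| + 1) ≤ c / 2 := by
    have hle := min_le_right (1/2 : ℝ) (c / (2 * (|m₁| + 1)))
    calc eps * (|m₁| + 1) ≤ (c / (2 * (|m₁| + 1))) * (|m₁| + 1) :=
          mul_le_mul_of_nonneg_right hle (by positivity)
      _ = c / 2 := by field_simp
  refine ⟨eps • S, ?_, ?_⟩
  · rw [transpose_smul, hSsym]
  · have hmat : B * Bᵀ + (A * (eps • S) + (eps • S) * Aᵀ) + (eps • S) * Q * (eps • S)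
        = (1 - eps) • (B * Bᵀ) + eps • (B * Bᵀ + (A * S + S * Aᵀ))
          + (eps * eps) • (S * Q * S) := by
      simp only [Matrix.mul_smul, Matrix.smul_mul, smul_smul, smul_add]
      module
    apply qf_pos_of_sphere
    intro y hy
    rw [hmat, qf_add, qf_add, qf_smul, qf_smul, qf_smul]
    have h1 : 0 ≤ qf (B * Bᵀ) y := qf_BBt_nonneg B y
    have h2 : c ≤ qf (B * Bᵀ + (A * S + S * Aᵀ)) y := hminM y hy
    have h3 : m₁ ≤ qf (S * Q * S) y := hminR y hy
    have habs : -|m₁| ≤ m₁ := neg_abs_le m₁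
    have hA1 : 0 ≤ (1 - eps) * qf (B * Bᵀ) y := mul_nonneg (by linarith) h1
    have hA2 : eps * c ≤ eps * qf (B * Bᵀ + (A * S + S * Aᵀ)) y :=
      mul_le_mul_of_nonneg_left h2 heps0.le
    have hA3 : (eps * eps) * m₁ ≤ (eps * eps) * qf (S * Q * S) y :=
      mul_le_mul_of_nonneg_left h3 (by positivity)
    have hA4 : eps * |m₁| ≤ c / 2 := by nlinarith [heps0]
    have hA5 : -(eps * (c / 2)) ≤ (eps * eps) * m₁ := by
      nlinarith [mul_nonneg (sub_nonneg.mpr hA4) heps0.le,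
        mul_nonneg (mul_nonneg heps0.le heps0.le) (by linarith : (0:ℝ) ≤ m₁ + |m₁|)]
    nlinarith [mul_pos heps0 hc]

end Key

end FaibAux


theorem exists_positive_lagrangian_of_controllable {n k : ℕ}
    (hn : 1 ≤ n) (hk : 1 ≤ k)
    (A Q : Matrix (Fin n) (Fin n) ℝ) (hQ : Q.IsSymm) (B : Matrix (Fin n) (Fin k) ℝ)
    (hctrl : Controllable A B) :
    ∃ Λ : Submodule ℝ (Fin n ⊕ Fin n → ℝ),
      Module.finrank ℝ Λ = n ∧
      (∀ u ∈ Λ, ∀ v ∈ Λ, u ⬝ᵥ (Omega n).mulVec v = 0) ∧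
      (∀ z ∈ Λ, z ≠ 0 → 0 < z ⬝ᵥ (HMat A Q B).mulVec z) := by
  classical
  obtain ⟨S, hSsym, hSpd⟩ := FaibAux.exists_S_final A B hn Q hctrl
  -- the graph map x ↦ (x, S x)
  set T : (Fin n → ℝ) →ₗ[ℝ] (Fin n ⊕ Fin n → ℝ) :=
    { toFun := fun x => Sum.elim x (S *ᵥ x)
      map_add' := by
        intro x y
        funext i
        cases i with
        | inl i => simp
        | inr i => simp [mulVec_add]
      map_smul' := by
        intro c x
        funext i
        cases i with
        | inl i => simp
        | inr i => simp [mulVec_smul] } with hT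
  have hTapp : ∀ x, T x = Sum.elim x (S *ᵥ x) := fun _ => rfl
  -- symmetric dot-product identity
  have hS1 : ∀ (x w : Fin n → ℝ), x ⬝ᵥ S *ᵥ w = (S *ᵥ x) ⬝ᵥ w := by
    intro x w
    rw [dotProduct_mulVec, ← mulVec_transpose, hSsym]
  refine ⟨LinearMap.range T, ?_, ?_, ?_⟩
  · have hinj : Function.Injective T := by
      intro x y hxy
      funext i
      have := congrFun hxy (Sum.inl i)
      simpa [hTapp] using this
    rw [LinearMap.finrank_range_of_inj hinj, Module.finrank_pi, Fintype.card_fin]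
  · rintro u ⟨x, rfl⟩ v ⟨y, rfl⟩
    rw [hTapp, hTapp]
    show (Sum.elim x (S *ᵥ x)) ⬝ᵥ (Omega n) *ᵥ (Sum.elim y (S *ᵥ y)) = 0
    rw [Omega, fromBlocks_mulVec]
    simp only [Sum.elim_comp_inl, Sum.elim_comp_inr]
    rw [sumElim_dotProduct_sumElim]
    have hneg : (-1 : Matrix (Fin n) (Fin n) ℝ) *ᵥ y = -y := by
      rw [Matrix.neg_mulVec, Matrix.one_mulVec]
    rw [Matrix.zero_mulVec, Matrix.zero_mulVec, Matrix.one_mulVec, hneg, zero_add, add_zero]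
    rw [hS1, dotProduct_neg]
    ring
  · rintro z ⟨x, rfl⟩ hz
    have hx : x ≠ 0 := by
      intro h
      apply hz
      rw [h, map_zero]
    rw [hTapp]
    show 0 < (Sum.elim x (S *ᵥ x)) ⬝ᵥ (HMat A Q B) *ᵥ (Sum.elim x (S *ᵥ x))
    have hkey : (Sum.elim x (S *ᵥ x)) ⬝ᵥ (HMat A Q B) *ᵥ (Sum.elim x (S *ᵥ x))
        = FaibAux.qf (B * Bᵀ + (A * S + S * Aᵀ) + S * Q * S) x := by
      rw [HMat, fromBlocks_mulVec]
      simp only [Sum.elim_comp_inl, Sum.elim_comp_inr]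
      rw [sumElim_dotProduct_sumElim]
      have t2 : x ⬝ᵥ (A *ᵥ (S *ᵥ x)) = x ⬝ᵥ ((A * S) *ᵥ x) := by
        rw [mulVec_mulVec]
      have t3 : (S *ᵥ x) ⬝ᵥ (Aᵀ *ᵥ x) = x ⬝ᵥ ((S * Aᵀ) *ᵥ x) := by
        rw [← hS1, mulVec_mulVec]
      have t4 : (S *ᵥ x) ⬝ᵥ (Q *ᵥ (S *ᵥ x)) = x ⬝ᵥ ((S * Q * S) *ᵥ x) := by
        rw [← hS1, mulVec_mulVec, mulVec_mulVec]
      rw [FaibAux.qf, Matrix.add_mulVec, Matrix.add_mulVec, Matrix.add_mulVec]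
      rw [dotProduct_add, dotProduct_add, dotProduct_add, dotProduct_add]
      rw [t2, t3, t4, dotProduct_add]
      ring
    rw [hkey]
    exact hSpd x hx
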